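/- Let P = {p₁, ..., p_k} ⊆ ℚ^n with k ≥ 1 be a finite set. The interior of the monoid P* equals P* ∩ (ℚ₊^{>0}·p₁ + ... + ℚ₊^{>0}·p_k), i.e., a vector a ∈ P* is interior to P* if and only if a can be written as a sum λ₁p₁ + ... + λ_k p_k with all λ_i positive rationals. -/

import Mathlib

/-- `a` is an interior vector of the monoid `M ⊆ ℚ^n`. -/
def IsInterior {n : ℕ} (M : Set (Fin n → ℚ)) (a : Fin n → ℚ) : Prop :=
  a ∈ M ∧ ∀ x ∈ M, ∃ N : ℕ, 1 ≤ N ∧ ∃ m ∈ M, N • a = x + m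

lemma mem_cl_aux {n : ℕ} (P : Finset (Fin n → ℚ)) (x : Fin n → ℚ) :
    x ∈ AddSubmonoid.closure (P : Set (Fin n → ℚ)) ↔
      ∃ c : (Fin n → ℚ) → ℕ, x = ∑ p ∈ P, c p • p := by
  rw [← Submodule.span_nat_eq_addSubmonoidClosure, Submodule.mem_toAddSubmonoid]
  constructor
  · intro h
    obtain ⟨f, -, hf⟩ := Submodule.mem_span_finset.1 h
    exact ⟨f, hf.symm⟩
  · rintro ⟨c, rfl⟩
    exact Submodule.sum_mem _ fun p hp => Submodule.smul_mem _ _ (Submodule.subset_span hp)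

theorem stmt1 {n : ℕ} (P : Finset (Fin n → ℚ)) (hP : P.Nonempty) (a : Fin n → ℚ) :
    IsInterior (AddSubmonoid.closure (P : Set (Fin n → ℚ)) : Set (Fin n → ℚ)) a ↔
      (a ∈ AddSubmonoid.closure (P : Set (Fin n → ℚ)) ∧
        ∃ lam : (Fin n → ℚ) → ℚ, (∀ p ∈ P, 0 < lam p) ∧ a = ∑ p ∈ P, lam p • p) := by
  constructor
  · rintro ⟨ha, hint⟩
    refine ⟨ha, ?_⟩
    have H : ∀ p ∈ P, ∃ N : ℕ, 1 ≤ N ∧ ∃ c : (Fin n → ℚ) → ℕ,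
        N • a = p + ∑ q ∈ P, c q • q := by
      intro p hp
      obtain ⟨N, hN, m, hm, hEq⟩ := hint p (AddSubmonoid.subset_closure hp)
      obtain ⟨c, rfl⟩ := (mem_cl_aux P m).1 hm
      exact ⟨N, hN, c, hEq⟩
    choose! N hN c hc using H
    set Nt : ℕ := ∑ p ∈ P, N p with hNt
    have hNt1 : 1 ≤ Nt := by
      obtain ⟨p, hp⟩ := hP
      calc 1 ≤ N p := hN p hp
        _ ≤ Nt := Finset.single_le_sum (fun q _ => Nat.zero_le _) hp
    have hNtQ : (0:ℚ) < (Nt : ℚ) := by exact_mod_cast hNt1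
    have key : Nt • a = ∑ p ∈ P, p + ∑ q ∈ P, (∑ p ∈ P, c p q) • q := by
      rw [hNt, Finset.sum_smul, Finset.sum_congr rfl (fun p hp => hc p hp),
        Finset.sum_add_distrib, Finset.sum_comm]
      congr 1
      exact Finset.sum_congr rfl fun q _ => by rw [Finset.sum_smul]
    refine ⟨fun q => (1 + (∑ p ∈ P, c p q : ℕ)) / (Nt : ℚ), fun p _ => by positivity, ?_⟩
    have keyQ : (Nt : ℚ) • a = ∑ q ∈ P, ((1 + (∑ p ∈ P, c p q : ℕ) : ℚ)) • q := by
      rw [Nat.cast_smul_eq_nsmul, key]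
      rw [Finset.sum_congr rfl (fun q (_ : q ∈ P) => by
        rw [add_smul, one_smul, Nat.cast_smul_eq_nsmul] :
        ∀ q ∈ P, ((1 + (∑ p ∈ P, c p q : ℕ) : ℚ)) • q = q + (∑ p ∈ P, c p q) • q)]
      rw [Finset.sum_add_distrib]
    have : a = (Nt : ℚ)⁻¹ • ((Nt : ℚ) • a) := (inv_smul_smul₀ (ne_of_gt hNtQ) a).symm
    rw [this, keyQ, Finset.smul_sum]
    refine Finset.sum_congr rfl fun q _ => ?_
    simp only [smul_smul, div_eq_inv_mul]
  · rintro ⟨ha, lam, hpos, hsum⟩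
    refine ⟨ha, ?_⟩
    intro x hx
    obtain ⟨cx, rfl⟩ := (mem_cl_aux P x).1 hx
    set D : ℕ := ∏ p ∈ P, (lam p).den with hD
    have hDpos : 0 < D := Finset.prod_pos fun p _ => (lam p).pos
    have hden : ∀ p ∈ P, (lam p).den ∣ D := fun p hp => Finset.dvd_prod_of_mem _ hp
    set f : (Fin n → ℚ) → ℕ := fun p => (lam p).num.toNat * (D / (lam p).den) with hf
    have hf1 : ∀ p ∈ P, 1 ≤ f p := by
      intro p hp
      have h1 : 1 ≤ (lam p).num.toNat := by
        have := Rat.num_pos.2 (hpos p hp)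
        omega
      have h2 : 1 ≤ D / (lam p).den := Nat.one_le_div_iff (lam p).pos |>.2
        (Nat.le_of_dvd hDpos (hden p hp))
      exact Nat.one_le_iff_ne_zero.2 (by positivity)
    have hfQ : ∀ p ∈ P, (f p : ℚ) = (D : ℚ) * lam p := by
      intro p hp
      have hdne : ((lam p).den : ℚ) ≠ 0 := by exact_mod_cast (lam p).den_nz
      have hnum : ((lam p).num.toNat : ℚ) = ((lam p).num : ℚ) := by
        exact_mod_cast congrArg (Int.cast : ℤ → ℚ)
          (Int.toNat_of_nonneg (le_of_lt (Rat.num_pos.2 (hpos p hp))))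
      have hlam : lam p * ((lam p).den : ℚ) = ((lam p).num : ℚ) := by
        exact_mod_cast Rat.mul_den_eq_num (lam p)
      rw [hf]
      push_cast [Nat.cast_div (hden p hp) hdne]
      rw [hnum]
      field_simp
      linear_combination -hlam
    set K : ℕ := 1 + ∑ p ∈ P, cx p with hK
    refine ⟨K * D, Nat.one_le_iff_ne_zero.2 (Nat.mul_ne_zero (by omega) (by omega)), ∑ p ∈ P, (K * f p - cx p) • p,
      (mem_cl_aux P _).2 ⟨fun p => K * f p - cx p, ?_⟩, ?_⟩
    · -- m is the sum with coefficients K * f p - cx p, but mem_cl_aux needs equality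
      rfl
    · have hle : ∀ p ∈ P, cx p ≤ K * f p := by
        intro p hp
        calc cx p ≤ ∑ q ∈ P, cx q := Finset.single_le_sum (fun q _ => Nat.zero_le _) hp
          _ ≤ K := by omega
          _ ≤ K * f p := Nat.le_mul_of_pos_right K (hf1 p hp)
      have lhs : ((K * D : ℕ) • a : Fin n → ℚ) = ∑ p ∈ P, (K * f p) • p := by
        rw [← Nat.cast_smul_eq_nsmul ℚ, hsum, Finset.smul_sum]
        refine Finset.sum_congr rfl fun p hp => ?_
        rw [smul_smul, ← Nat.cast_smul_eq_nsmul ℚ (K * f p)]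
        congr 1
        push_cast [hfQ p hp]
        ring
      rw [lhs, ← Finset.sum_add_distrib]
      refine Finset.sum_congr rfl fun p hp => ?_
      rw [← add_smul]
      congr 1
      have := hle p hp
      omega
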